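/- Let d ∈ (0, 1/2) and let v₁, v₂ be real numbers with v₁ ≠ v₂. Then ∫_ℝ (v₁ - x)₊^{d-1} (v₂ - x)₊^{d-1} dx = |v₁ - v₂|^{2d-1} · B(d, 1-2d), where B is the Beta function. -/

import Mathlib

open MeasureTheory Set

noncomputable def Beta (a b : ℝ) : ℝ :=
  ∫ x in Set.Ioo (0:ℝ) 1, x ^ (a - 1) * (1 - x) ^ (b - 1)

lemma phi_image (c : ℝ) (hc : 0 < c) :
    (fun u : ℝ => c * u / (1 - u)) '' Ioo 0 1 = Ioi 0 := by
  ext y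
  simp only [mem_image, mem_Ioo, mem_Ioi]
  constructor
  · rintro ⟨u, ⟨hu0, hu1⟩, rfl⟩
    exact div_pos (by positivity) (by linarith)
  · intro hy
    have hyc : (0:ℝ) < y + c := by linarith
    refine ⟨y / (y + c), ⟨by positivity, ?_⟩, ?_⟩
    · rw [div_lt_one hyc]; linarith
    · have h2 : 1 - y/(y+c) = c/(y+c) := by field_simp; ring
      rw [h2]
      field_simp
  
lemma phi_inj (c : ℝ) (hc : 0 < c) :
    InjOn (fun u : ℝ => c * u / (1 - u)) (Ioo 0 1) := by
  rintro u ⟨hu0, hu1⟩ v ⟨hv0, hv1⟩ h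
  simp only at h
  rw [div_eq_div_iff (by linarith) (by linarith)] at h
  nlinarith [h]

lemma main_lemma (d c : ℝ) (hd0 : 0 < d) (hd : d < 1/2) (hc : 0 < c) :
    ∫ x in Ioi (0:ℝ), x ^ (d-1) * (x + c) ^ (d-1)
      = c ^ (2*d - 1) * Beta d (1 - 2*d) := by
  have hderiv : ∀ u ∈ Ioo (0:ℝ) 1,
      HasDerivWithinAt (fun u : ℝ => c * u / (1 - u)) (c / (1 - u)^2) (Ioo 0 1) u := by
    intro u ⟨hu0, hu1⟩
    have h1 : (1:ℝ) - u ≠ 0 := by linarith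
    have h := (((hasDerivAt_id u).const_mul c).div
      ((hasDerivAt_const u 1).sub (hasDerivAt_id u)) h1)
    simp only [id_eq, mul_one] at h
    refine (h.congr_deriv ?_).hasDerivWithinAt
    simp only [Pi.sub_apply, id_eq]
    rw [div_eq_div_iff (by positivity) (by positivity)]
    ring
  rw [← phi_image c hc,
    integral_image_eq_integral_abs_deriv_smul measurableSet_Ioo hderiv (phi_inj c hc)]
  rw [Beta, ← integral_const_mul]
  apply setIntegral_congr_fun measurableSet_Ioo
  rintro u ⟨hu0, hu1⟩
  have ht : (0:ℝ) < 1 - u := by linarith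
  have hplus : c * u / (1 - u) + c = c / (1 - u) := by field_simp; ring
  simp only [smul_eq_mul, hplus]
  rw [abs_of_pos (by positivity)]
  rw [Real.div_rpow (by positivity) ht.le, Real.div_rpow (by positivity) ht.le,
    Real.mul_rpow hc.le hu0.le]
  rw [show (2*d - 1) = (d-1) + (d-1) + 1 by ring, Real.rpow_add hc, Real.rpow_add hc,
    Real.rpow_one]
  rw [show (1 - 2*d - 1 : ℝ) = -(d-1) + (-(d-1)) + (-2) by ring,
    Real.rpow_add ht, Real.rpow_add ht, Real.rpow_neg ht.le,
    Real.rpow_neg ht.le, show ((2:ℝ) = (2:ℕ)) by norm_num, Real.rpow_natCast]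
  have h3 : (1-u)^(d-1) ≠ 0 := (Real.rpow_pos_of_pos ht _).ne'
  field_simp

theorem integral_prod_plus_rpow (d v₁ v₂ : ℝ) (hd0 : 0 < d) (hd : d < 1/2)
    (hv : v₁ ≠ v₂) :
    ∫ x : ℝ, (max (v₁ - x) 0) ^ (d - 1) * (max (v₂ - x) 0) ^ (d - 1)
      = |v₁ - v₂| ^ (2 * d - 1) * Beta d (1 - 2 * d) := by
  have key : ∀ w₁ w₂ : ℝ, w₁ < w₂ →
      ∫ x : ℝ, (max (w₁ - x) 0) ^ (d - 1) * (max (w₂ - x) 0) ^ (d - 1)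
        = |w₁ - w₂| ^ (2 * d - 1) * Beta d (1 - 2 * d) := by
    intro w₁ w₂ hw
    set c := w₂ - w₁ with hcdef
    have hc : 0 < c := by simp only [hcdef]; linarith
    have h1 : ∫ x : ℝ, (max (w₁ - x) 0) ^ (d - 1) * (max (w₂ - x) 0) ^ (d - 1)
        = ∫ x : ℝ, (max x 0) ^ (d - 1) * (max (x + c) 0) ^ (d - 1) := by
      rw [← integral_sub_left_eq_self
        (fun x : ℝ => (max x 0) ^ (d - 1) * (max (x + c) 0) ^ (d - 1)) volume w₁]
      congr 1
      ext x
      congr 2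
      simp only [hcdef]
      ring
    rw [h1, ← setIntegral_eq_integral_of_forall_compl_eq_zero (s := Ioi (0:ℝ))]
    · have h2 : ∫ x in Ioi (0:ℝ), (max x 0) ^ (d - 1) * (max (x + c) 0) ^ (d - 1)
          = ∫ x in Ioi (0:ℝ), x ^ (d-1) * (x + c) ^ (d-1) := by
        apply setIntegral_congr_fun measurableSet_Ioi
        intro x hx
        simp only [mem_Ioi] at hx
        simp only [max_eq_left hx.le, max_eq_left (show (0:ℝ) ≤ x + c by linarith)]
      rw [h2, main_lemma d c hd0 hd hc]
      congr 2
      rw [abs_sub_comm, hcdef, abs_of_pos hc]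
    · intro x hx
      simp only [mem_Ioi, not_lt] at hx
      rw [max_eq_right hx, Real.zero_rpow (by linarith : d - 1 ≠ 0), zero_mul]
  rcases hv.lt_or_gt with h | h
  · exact key v₁ v₂ h
  · have h1 : ∫ x : ℝ, (max (v₁ - x) 0) ^ (d - 1) * (max (v₂ - x) 0) ^ (d - 1)
        = ∫ x : ℝ, (max (v₂ - x) 0) ^ (d - 1) * (max (v₁ - x) 0) ^ (d - 1) := by
      congr 1; ext x; ring
    rw [h1, key v₂ v₁ h, abs_sub_comm]
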